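/- Let φ be a bijective antimorphism of the free monoid (i.e., φ(XY) = φ(Y)φ(X)) satisfying φ(φ(a)) = a for every letter a. If A·P·Q·φ(A)·X = R for palindromes P, Q, R and words A, X, then there exist palindromes S, T, U and a word Z such that either X = Z·S·T·φ(Z)·U or X = S·Z·T·U·φ(Z). -/
import Mathlib

def Pal {α : Type*} (w : List α) : Prop := w.reverse = w

noncomputable def palLen {α : Type*} (w : List α) : ℕ :=
  sInf {k | ∃ l : List (List α), l.length = k ∧ (∀ p ∈ l, Pal p) ∧ l.flatten = w}

section Aux
variable {α : Type*}

lemma pal_nil : Pal ([] : List α) := rfl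

lemma peel {u v x y : List α} (h : u ++ v = x ++ y) :
    (∃ w, x = u ++ w ∧ v = w ++ y) ∨ (∃ w, u = x ++ w ∧ y = w ++ v) :=
  List.append_eq_append_iff.1 h

/-- Palindromic overlap lemma. -/
lemma POL {u v : List α} (h : Pal (u ++ v)) :
    (∃ w, Pal w ∧ v = w ++ u.reverse) ∨ (∃ w, Pal w ∧ u = v.reverse ++ w) := by
  have h' : v.reverse ++ u.reverse = u ++ v := by
    have := h; unfold Pal at this; simpa [List.reverse_append] using this
  rcases peel h' with ⟨w, hw1, hw2⟩ | ⟨w, hw1, hw2⟩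
  · -- u = v.reverse ++ w, u.reverse = w ++ v
    right
    refine ⟨w, ?_, hw1⟩
    have : u.reverse = w.reverse ++ v := by rw [hw1]; simp [List.reverse_append]
    rw [this] at hw2
    exact (List.append_inj hw2 (by simp)).1
  · -- v.reverse = u ++ w, v = w ++ u.reverse
    left
    refine ⟨w, ?_, hw2⟩
    have : v = w.reverse ++ u.reverse := by
      have := congrArg List.reverse hw1; simpa [List.reverse_append] using this
    rw [this] at hw2
    exact (List.append_inj hw2 (by simp)).1

/-- Conjugacy with reversal lemma. -/
lemma conjPal : ∀ n (L u : List α), L.length ≤ n → u ++ L = L ++ u.reverse →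
    ∃ s t, Pal s ∧ Pal t ∧ u = s ++ t := by
  intro n
  induction n with
  | zero =>
    intro L u hL h
    have : L = [] := List.length_eq_zero_iff.1 (Nat.le_zero.1 hL)
    subst this
    simp only [List.append_nil, List.nil_append] at h
    exact ⟨u, [], by rw [Pal, ← h], pal_nil, by simp⟩
  | succ n ih =>
    intro L u hL h
    rcases peel h with ⟨w, hw1, hw2⟩ | ⟨w, hw1, hw2⟩
    ·
      -- from peel on h : u ++ L = L ++ u.reverse : x := L, y := u.reverse
      -- branch1 : L = u ++ w ∧ L = w ++ u.reverse
      by_cases hu : u = []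
      · exact ⟨[], [], pal_nil, pal_nil, by simp [hu]⟩
      · have hlen : w.length ≤ n := by
          have h1 : L.length = u.length + w.length := by rw [hw1]; simp
          have h2 : 0 < u.length := List.length_pos_iff.2 hu
          omega
        have heq : u ++ w = w ++ u.reverse := hw1.symm.trans hw2
        exact ih w u hlen heq
    · -- u = L ++ w ∧ u.reverse = w ++ L
      refine ⟨L, w, ?_, ?_, hw1⟩
      · have : u.reverse = w.reverse ++ L.reverse := by rw [hw1]; simp
        rw [this] at hw2
        have := (List.append_inj hw2 (by simp)).2
        exact this
      · have : u.reverse = w.reverse ++ L.reverse := by rw [hw1]; simp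
        rw [this] at hw2
        have := (List.append_inj hw2 (by simp)).1
        exact this

lemma conjPal' {L u : List α} (h : u ++ L = L ++ u.reverse) :
    ∃ s t, Pal s ∧ Pal t ∧ u = s ++ t :=
  conjPal L.length L u le_rfl h

end Aux
section Aux2
variable {α : Type*} (φ : List α → List α)

def InC (X : List α) : Prop :=
  ∃ S T U Z : List α, Pal S ∧ Pal T ∧ Pal U ∧
    (X = Z ++ S ++ T ++ φ Z ++ U ∨ X = S ++ Z ++ T ++ U ++ φ Z)

lemma InC_first {X : List α} (Z S T U : List α) (hS : Pal S) (hT : Pal T) (hU : Pal U)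
    (hX : X = Z ++ S ++ T ++ φ Z ++ U) : InC φ X :=
  ⟨S, T, U, Z, hS, hT, hU, Or.inl hX⟩

lemma InC_second {X : List α} (Z S T U : List α) (hS : Pal S) (hT : Pal T) (hU : Pal U)
    (hX : X = S ++ Z ++ T ++ U ++ φ Z) : InC φ X :=
  ⟨S, T, U, Z, hS, hT, hU, Or.inr hX⟩

variable (happ : ∀ u v : List α, φ (u ++ v) = φ v ++ φ u)
variable (hphiphi : ∀ w : List α, φ (φ w) = w)
variable (hrev : ∀ w : List α, φ w.reverse = (φ w).reverse)

lemma pal_eq {u : List α} (h : Pal u) : u.reverse = u := h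

lemma phi_nil (happ : ∀ u v : List α, φ (u ++ v) = φ v ++ φ u) : φ [] = [] := by
  have := happ [] []
  simp only [List.append_nil] at this
  have h2 : φ [] ++ [] = φ [] ++ φ [] := by simpa using this
  exact (List.append_cancel_left h2).symm

lemma pal_phi (hrev : ∀ w : List α, φ w.reverse = (φ w).reverse)
    {u : List α} (hu : Pal u) : Pal (φ u) := by
  show (φ u).reverse = φ u
  rw [← hrev, hu]

lemma pal_sig (hrev : ∀ w : List α, φ w.reverse = (φ w).reverse)
    {u : List α} (hu : Pal u) : Pal (φ u.reverse) := by
  rw [hu]; exact pal_phi φ hrev hu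

lemma InC_sigma (happ : ∀ u v : List α, φ (u ++ v) = φ v ++ φ u)
    (hphiphi : ∀ w : List α, φ (φ w) = w)
    (hrev : ∀ w : List α, φ w.reverse = (φ w).reverse)
    {X : List α} (h : InC φ (φ X.reverse)) : InC φ X := by
  obtain ⟨S, T, U, Z, hS, hT, hU, hcase⟩ := h
  have hXeq : X = φ ((φ X.reverse)).reverse := by
    rw [← hrev, List.reverse_reverse, hphiphi]
  rcases hcase with hY | hY
  · -- φ X.reverse = Z ++ S ++ T ++ φ Z ++ U
    refine InC_first φ (φ Z.reverse) (φ S.reverse) (φ T.reverse) (φ U.reverse)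
      (pal_sig φ hrev hS) (pal_sig φ hrev hT) (pal_sig φ hrev hU) ?_
    rw [hXeq, hY]
    simp [List.reverse_append, happ, hrev, hphiphi, List.append_assoc]
  · refine InC_second φ (φ Z.reverse) (φ S.reverse) (φ T.reverse) (φ U.reverse)
      (pal_sig φ hrev hS) (pal_sig φ hrev hT) (pal_sig φ hrev hU) ?_
    rw [hXeq, hY]
    simp [List.reverse_append, happ, hrev, hphiphi, List.append_assoc]

end Aux2
section Aux3
variable {α : Type*} (φ : List α → List α)

/-- L9': if B ++ D.reverse = s ++ t with s,t palindromes, then B.reverse ++ G ++ φ(D.reverse)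
is in the class. -/
lemma lem91 (happ : ∀ u v : List α, φ (u ++ v) = φ v ++ φ u)
    (hphiphi : ∀ w : List α, φ (φ w) = w)
    (hrev : ∀ w : List α, φ w.reverse = (φ w).reverse)
    {B D s t G : List α} (hG : Pal G) (hs : Pal s) (ht : Pal t)
    (h : B ++ D.reverse = s ++ t) : InC φ (B.reverse ++ G ++ φ D.reverse) := by
  rcases peel h with ⟨e, he1, he2⟩ | ⟨e, he1, he2⟩
  · -- he1 : s = B ++ e, he2 : D.reverse = e ++ t
    rw [he1] at hs
    rcases POL hs with ⟨o, ho, heo⟩ | ⟨o, ho, hBo⟩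
    · -- heo : e = o ++ B.reverse
      refine InC_first φ B.reverse G (φ t.reverse) (φ o.reverse)
        hG (pal_sig φ hrev ht) (pal_sig φ hrev ho) ?_
      rw [he2, heo]
      simp [happ, hrev, hphiphi, pal_eq ht, pal_eq ho, pal_eq (pal_phi φ hrev ht), pal_eq (pal_phi φ hrev ho), List.append_assoc]
    · -- hBo : B = e.reverse ++ o
      refine InC_second φ e o G (φ t.reverse)
        ho hG (pal_sig φ hrev ht) ?_
      rw [he2, hBo]
      simp [happ, hrev, hphiphi, pal_eq ht, pal_eq ho, pal_eq (pal_phi φ hrev ht), pal_eq (pal_phi φ hrev ho), List.append_assoc]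
  · -- he1 : B = s ++ e, he2 : t = e ++ D.reverse
    rw [he2] at ht
    rcases POL ht with ⟨o, ho, hDo⟩ | ⟨o, ho, heo⟩
    · -- hDo : D.reverse = o ++ e.reverse
      refine InC_first φ e.reverse s G (φ o.reverse)
        hs hG (pal_sig φ hrev ho) ?_
      rw [he1, hDo]
      simp [happ, hrev, hphiphi, pal_eq hs, pal_eq ho, pal_eq (pal_phi φ hrev hs), pal_eq (pal_phi φ hrev ho), List.append_assoc]
    · -- heo : e = D.reverse.reverse ++ o
      refine InC_second φ D.reverse o s G
        ho hs hG ?_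
      rw [he1, heo]
      simp [happ, hrev, hphiphi, pal_eq hs, pal_eq ho, pal_eq (pal_phi φ hrev hs), pal_eq (pal_phi φ hrev ho), List.append_assoc]

/-- L9'': version with D.reverse ++ B = s ++ t. -/
lemma lem92 (happ : ∀ u v : List α, φ (u ++ v) = φ v ++ φ u)
    (hphiphi : ∀ w : List α, φ (φ w) = w)
    (hrev : ∀ w : List α, φ w.reverse = (φ w).reverse)
    {B D s t G : List α} (hG : Pal G) (hs : Pal s) (ht : Pal t)
    (h : D.reverse ++ B = s ++ t) : InC φ (B.reverse ++ G ++ φ D.reverse) := by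
  rcases peel h with ⟨e, he1, he2⟩ | ⟨e, he1, he2⟩
  · -- he1 : s = D.reverse ++ e, he2 : B = e ++ t
    rw [he1] at hs
    rcases POL hs with ⟨o, ho, heo⟩ | ⟨o, ho, hDo⟩
    · -- heo : e = o ++ D.reverse.reverse  (= o ++ D)
      refine InC_second φ D.reverse t o G
        ht ho hG ?_
      rw [he2, heo]
      simp [happ, hrev, hphiphi, pal_eq ht, pal_eq ho, pal_eq (pal_phi φ hrev ht), pal_eq (pal_phi φ hrev ho), List.append_assoc]
    · -- hDo : D.reverse = e.reverse ++ o
      refine InC_second φ e.reverse t G (φ o.reverse)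
        ht hG (pal_sig φ hrev ho) ?_
      rw [he2, hDo]
      simp [happ, hrev, hphiphi, pal_eq ht, pal_eq ho, pal_eq (pal_phi φ hrev ht), pal_eq (pal_phi φ hrev ho), List.append_assoc]
  · -- he1 : D.reverse = s ++ e, he2 : t = e ++ B
    rw [he2] at ht
    rcases POL ht with ⟨o, ho, hBo⟩ | ⟨o, ho, heo⟩
    · -- hBo : B = o ++ e.reverse
      refine InC_first φ e o G (φ s.reverse)
        ho hG (pal_sig φ hrev hs) ?_
      rw [he1, hBo]
      simp [happ, hrev, hphiphi, pal_eq hs, pal_eq ho, pal_eq (pal_phi φ hrev hs), pal_eq (pal_phi φ hrev ho), List.append_assoc]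
    · -- heo : e = B.reverse ++ o
      refine InC_first φ B.reverse G (φ o.reverse) (φ s.reverse)
        hG (pal_sig φ hrev ho) (pal_sig φ hrev hs) ?_
      rw [he1, heo]
      simp [happ, hrev, hphiphi, pal_eq hs, pal_eq ho, pal_eq (pal_phi φ hrev hs), pal_eq (pal_phi φ hrev ho), List.append_assoc]

end Aux3
section Aux4
variable {α : Type*} (φ : List α → List α)

/-- L11: if D ++ B.reverse = d ++ c ++ t with d,c,t palindromes then
B.reverse ++ φ(D.reverse) is in the class. -/
lemma lem11 (happ : ∀ u v : List α, φ (u ++ v) = φ v ++ φ u)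
    (hphiphi : ∀ w : List α, φ (φ w) = w)
    (hrev : ∀ w : List α, φ w.reverse = (φ w).reverse)
    {B D d c t : List α} (hd : Pal d) (hc : Pal c) (ht : Pal t)
    (h : D ++ B.reverse = d ++ (c ++ t)) : InC φ (B.reverse ++ φ D.reverse) := by
  rcases peel h with ⟨f, hf1, hf2⟩ | ⟨f, hf1, hf2⟩
  · -- hf1 : d = D ++ f, hf2 : B.reverse = f ++ (c ++ t)
    rw [hf1] at hd
    rcases POL hd with ⟨o, ho, hfo⟩ | ⟨o, ho, hDo⟩
    · -- hfo : f = o ++ D.reverse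
      refine InC_second φ D.reverse o c t ho hc ht ?_
      rw [hf2, hfo]
      simp [happ, hrev, hphiphi, List.append_assoc]
    · -- hDo : D = f.reverse ++ o
      refine InC_first φ f c t (φ o.reverse) hc ht (pal_sig φ hrev ho) ?_
      rw [hf2, hDo]
      simp [happ, hrev, hphiphi, pal_eq ho, pal_eq (pal_phi φ hrev ho), List.append_assoc]
  · -- hf1 : D = d ++ f, hf2 : c ++ t = f ++ B.reverse
    rcases peel hf2 with ⟨g, hg1, hg2⟩ | ⟨g, hg1, hg2⟩
    · -- hg1 : f = c ++ g, hg2 : t = g ++ B.reverse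
      rw [hg2] at ht
      rcases POL ht with ⟨o, ho, hBo⟩ | ⟨o, ho, hgo⟩
      · -- hBo : B.reverse = o ++ g.reverse
        refine InC_second φ g.reverse o (φ d.reverse) (φ c.reverse)
          ho (pal_sig φ hrev hd) (pal_sig φ hrev hc) ?_
        rw [hBo, hf1, hg1]
        simp [happ, hrev, hphiphi, pal_eq hd, pal_eq hc, pal_eq (pal_phi φ hrev hd),
          pal_eq (pal_phi φ hrev hc), List.append_assoc]
      · -- hgo : g = B.reverse.reverse ++ o
        refine InC_first φ B.reverse (φ d.reverse) (φ c.reverse) (φ o.reverse)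
          (pal_sig φ hrev hd) (pal_sig φ hrev hc) (pal_sig φ hrev ho) ?_
        rw [hf1, hg1, hgo]
        simp [happ, hrev, hphiphi, pal_eq hd, pal_eq hc, pal_eq ho,
          pal_eq (pal_phi φ hrev hd), pal_eq (pal_phi φ hrev hc),
          pal_eq (pal_phi φ hrev ho), List.append_assoc]
    · -- hg1 : c = f ++ g, hg2 : B.reverse = g ++ t
      rw [hg1] at hc
      rcases POL hc with ⟨o, ho, hgo⟩ | ⟨o, ho, hfo⟩
      · -- hgo : g = o ++ f.reverse
        refine InC_second φ f.reverse o t (φ d.reverse)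
          ho ht (pal_sig φ hrev hd) ?_
        rw [hg2, hgo, hf1]
        simp [happ, hrev, hphiphi, pal_eq hd, pal_eq (pal_phi φ hrev hd), List.append_assoc]
      · -- hfo : f = g.reverse ++ o
        refine InC_first φ g t (φ d.reverse) (φ o.reverse)
          ht (pal_sig φ hrev hd) (pal_sig φ hrev ho) ?_
        rw [hg2, hf1, hfo]
        simp [happ, hrev, hphiphi, pal_eq hd, pal_eq ho, pal_eq (pal_phi φ hrev hd),
          pal_eq (pal_phi φ hrev ho), List.append_assoc]

end Aux4
section Aux5
variable {α : Type*} (φ : List α → List α)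

/-- L10: if d, c are palindromes and d ++ c ++ D ++ B.reverse is a palindrome, then
B.reverse ++ φ(D.reverse) is in the class. -/
lemma lem10 (happ : ∀ u v : List α, φ (u ++ v) = φ v ++ φ u)
    (hphiphi : ∀ w : List α, φ (φ w) = w)
    (hrev : ∀ w : List α, φ w.reverse = (φ w).reverse) :
    ∀ (n : ℕ) (d c D B : List α), d.length ≤ n → Pal d → Pal c →
    Pal (d ++ (c ++ (D ++ B.reverse))) → InC φ (B.reverse ++ φ D.reverse) := by
  intro n
  induction n using Nat.strong_induction_on with
  | _ n ih =>
  intro d c D B hn hd hc hpal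
  by_cases hBD : B = [] ∧ D = []
  · obtain ⟨hB, hD⟩ := hBD
    subst hB; subst hD
    refine InC_first φ [] [] [] [] pal_nil pal_nil pal_nil ?_
    simp [phi_nil φ happ]
  -- master equation
  have E : B ++ (D.reverse ++ (c ++ d)) = d ++ (c ++ (D ++ B.reverse)) := by
    have := pal_eq hpal
    simpa [List.reverse_append, pal_eq hd, pal_eq hc, List.append_assoc] using this
  rcases peel E with ⟨f, hf1, hf2⟩ | ⟨f, hf1, hf2⟩
  · -- case (ii) : hf1 : d = B ++ f, hf2 : D.reverse ++ (c ++ d) = f ++ (c ++ (D ++ B.reverse))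
    rw [hf1] at hd
    have pd : f.reverse ++ B.reverse = B ++ f := by
      have := pal_eq hd; simpa [List.reverse_append] using this
    rw [hf1] at hf2
    rcases peel hf2 with ⟨g, hg1, hg2⟩ | ⟨g, hg1, hg2⟩
    · -- (ii2) : hg1 : f = D.reverse ++ g, hg2 : c ++ (B ++ f) = g ++ (c ++ (D ++ B.reverse))
      -- pd2 : g.reverse ++ D ++ B.reverse = B ++ D.reverse ++ g
      have pd2 : g.reverse ++ (D ++ B.reverse) = B ++ (D.reverse ++ g) := by
        have := pd
        rw [hg1] at this
        simpa [List.reverse_append, List.append_assoc] using this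
      -- derive c ++ g.reverse = g ++ c
      have e5 : (c ++ g.reverse) ++ (D ++ B.reverse) = (g ++ c) ++ (D ++ B.reverse) := by
        have h2 := hg2
        rw [hg1] at h2
        -- h2 : c ++ (B ++ (D.reverse ++ g)) = g ++ (c ++ (D ++ B.reverse))
        calc (c ++ g.reverse) ++ (D ++ B.reverse) = c ++ (g.reverse ++ (D ++ B.reverse)) := by
              simp [List.append_assoc]
          _ = c ++ (B ++ (D.reverse ++ g)) := by rw [pd2]
          _ = g ++ (c ++ (D ++ B.reverse)) := h2
          _ = (g ++ c) ++ (D ++ B.reverse) := by simp [List.append_assoc]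
      have e6 : g ++ c = c ++ g.reverse := (List.append_cancel_right e5).symm
      obtain ⟨s, t, hs, ht, hst⟩ := conjPal' e6
      -- palindrome for recursion : t ++ s ++ D ++ B.reverse
      have hw : Pal (t ++ (s ++ (D ++ B.reverse))) := by
        show (t ++ (s ++ (D ++ B.reverse))).reverse = _
        have hgr : g.reverse = t ++ s := by rw [hst]; simp [pal_eq hs, pal_eq ht]
        calc (t ++ (s ++ (D ++ B.reverse))).reverse
            = B ++ (D.reverse ++ (s ++ t)) := by
              simp [List.reverse_append, pal_eq hs, pal_eq ht, List.append_assoc]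
          _ = B ++ (D.reverse ++ g) := by rw [hst]
          _ = g.reverse ++ (D ++ B.reverse) := pd2.symm
          _ = t ++ (s ++ (D ++ B.reverse)) := by rw [hgr]; simp [List.append_assoc]
      -- strict length decrease
      have hBD' : 0 < B.length + D.length := by
        rcases not_and_or.1 hBD with h | h
        · have := List.length_pos_iff.2 h; omega
        · have := List.length_pos_iff.2 h; omega
      have hlen : t.length < n := by
        have h1 : d.length = B.length + (D.length + (s.length + t.length)) := by
          rw [hf1, hg1, hst]; simp
        omega
      exact ih t.length hlen t s D B le_rfl ht hs hw
    · -- (ii1) : hg1 : D.reverse = f ++ g, hg2 : c ++ (D ++ B.reverse) = g ++ (c ++ (B ++ f))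
      -- D = g.reverse ++ f.reverse
      have hD : D = g.reverse ++ f.reverse := by
        have := congrArg List.reverse hg1
        simpa [List.reverse_append] using this
      have e5 : (c ++ g.reverse) ++ (B ++ f) = (g ++ c) ++ (B ++ f) := by
        calc (c ++ g.reverse) ++ (B ++ f) = c ++ (g.reverse ++ (f.reverse ++ B.reverse)) := by
              rw [← pd]; simp [List.append_assoc]
          _ = c ++ (D ++ B.reverse) := by rw [hD]; simp [List.append_assoc]
          _ = g ++ (c ++ (B ++ f)) := hg2
          _ = (g ++ c) ++ (B ++ f) := by simp [List.append_assoc]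
      have e6 : g ++ c = c ++ g.reverse := (List.append_cancel_right e5).symm
      obtain ⟨s, t, hs, ht, hst⟩ := conjPal' e6
      -- X = B.reverse ++ φ t ++ φ s ++ φ f ; use POL on Pal (B ++ f)
      rcases POL hd with ⟨o, ho, hfo⟩ | ⟨o, ho, hBo⟩
      · -- hfo : f = o ++ B.reverse
        refine InC_first φ B.reverse (φ t.reverse) (φ s.reverse) (φ o.reverse)
          (pal_sig φ hrev ht) (pal_sig φ hrev hs) (pal_sig φ hrev ho) ?_
        rw [hg1, hst, hfo]
        simp [happ, hrev, hphiphi, pal_eq hs, pal_eq ht, pal_eq ho,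
          pal_eq (pal_phi φ hrev hs), pal_eq (pal_phi φ hrev ht),
          pal_eq (pal_phi φ hrev ho), List.append_assoc]
      · -- hBo : B = f.reverse ++ o
        refine InC_second φ f o (φ t.reverse) (φ s.reverse)
          ho (pal_sig φ hrev ht) (pal_sig φ hrev hs) ?_
        rw [hg1, hst, hBo]
        simp [happ, hrev, hphiphi, pal_eq hs, pal_eq ht, pal_eq ho,
          pal_eq (pal_phi φ hrev hs), pal_eq (pal_phi φ hrev ht),
          pal_eq (pal_phi φ hrev ho), List.append_assoc]
  · -- case (i) : hf1 : B = d ++ f, hf2 : c ++ (D ++ B.reverse) = f ++ (D.reverse ++ (c ++ d))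
    have e2 : (c ++ (D ++ f.reverse)) ++ d = (f ++ (D.reverse ++ c)) ++ d := by
      have h2 := hf2
      rw [hf1] at h2
      simpa [List.reverse_append, pal_eq hd, List.append_assoc] using h2
    have e3 : c ++ (D ++ f.reverse) = f ++ (D.reverse ++ c) := List.append_cancel_right e2
    have e4 : (f ++ D.reverse) ++ c = c ++ (f ++ D.reverse).reverse := by
      simpa [List.reverse_append, List.append_assoc] using e3.symm
    obtain ⟨s, t, hs, ht, hst⟩ := conjPal' e4
    have h91 := lem91 φ happ hphiphi hrev hd hs ht hst
    have hgoal : B.reverse ++ φ D.reverse = f.reverse ++ d ++ φ D.reverse := by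
      rw [hf1]; simp [pal_eq hd, List.append_assoc]
    rw [hgoal]
    exact h91

end Aux5
section Aux6
variable {α : Type*} (φ : List α → List α)

/-- L3 : overlapping palindromes B++C and C++D give decomposition of B.reverse ++ P ++ σD. -/
lemma lemL3 (happ : ∀ u v : List α, φ (u ++ v) = φ v ++ φ u)
    (hphiphi : ∀ w : List α, φ (φ w) = w)
    (hrev : ∀ w : List α, φ w.reverse = (φ w).reverse)
    {B C D P : List α} (hP : Pal P) (hBC : Pal (B ++ C)) (hCD : Pal (C ++ D)) :
    InC φ (B.reverse ++ P ++ φ D.reverse) := by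
  rcases POL hBC with ⟨H, hH, hCH⟩ | ⟨H, hH, hBH⟩
  · -- hCH : C = H ++ B.reverse
    have e1 : D.reverse ++ (B ++ H) = H ++ (B.reverse ++ D) := by
      have := pal_eq hCD
      rw [hCH] at this
      simpa [List.reverse_append, pal_eq hH, List.append_assoc] using this
    rcases peel e1 with ⟨K, hK1, hK2⟩ | ⟨K, hK1, hK2⟩
    · -- L2' : hK1 : H = D.reverse ++ K, hK2 : B ++ H = K ++ (B.reverse ++ D)
      rw [hK1] at hH
      have xvi : K.reverse ++ D = D.reverse ++ K := by
        have := pal_eq hH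
        simpa [List.reverse_append, List.append_assoc] using this
      have xv : (B ++ K.reverse) ++ D = (K ++ B.reverse) ++ D := by
        calc (B ++ K.reverse) ++ D = B ++ (K.reverse ++ D) := by simp [List.append_assoc]
          _ = B ++ (D.reverse ++ K) := by rw [xvi]
          _ = K ++ (B.reverse ++ D) := by rw [← hK2, hK1]
          _ = (K ++ B.reverse) ++ D := by simp [List.append_assoc]
      have xv' : B ++ K.reverse = K ++ B.reverse := List.append_cancel_right xv
      have pBK : Pal (B ++ K.reverse) := by
        show (B ++ K.reverse).reverse = B ++ K.reverse
        rw [List.reverse_append, List.reverse_reverse]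
        exact xv'.symm
      rcases POL pBK with ⟨L, hL, hKL⟩ | ⟨L, hL, hBL⟩
      · -- hKL : K.reverse = L ++ B.reverse, so K = B ++ L
        have hK : K = B ++ L := by
          have := congrArg List.reverse hKL
          simpa [List.reverse_append, pal_eq hL] using this
        have e9 : (D.reverse ++ B) ++ L = L ++ (D.reverse ++ B).reverse := by
          have h0 := xvi
          rw [hK] at h0
          -- h0 : (B ++ L).reverse ++ D = D.reverse ++ (B ++ L)
          have h1 : L ++ (B.reverse ++ D) = D.reverse ++ (B ++ L) := by
            simpa [List.reverse_append, pal_eq hL, List.append_assoc] using h0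
          simpa [List.reverse_append, List.append_assoc] using h1.symm
        obtain ⟨s, t, hs, ht, hst⟩ := conjPal' e9
        exact lem92 φ happ hphiphi hrev hP hs ht hst
      · -- hBL : B = K.reverse.reverse ++ L = K ++ L
        have hB : B = K ++ L := by simpa using hBL
        rcases POL hH with ⟨o, ho, hKo⟩ | ⟨o, ho, hDo⟩
        · -- hKo : K = o ++ D.reverse.reverse
          refine InC_second φ D.reverse L o P hL ho hP ?_
          rw [hB, hKo]
          simp [happ, hrev, hphiphi, pal_eq ho, pal_eq hL, List.reverse_append, List.append_assoc]
        · -- hDo : D.reverse = K.reverse ++ o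
          refine InC_second φ K.reverse L P (φ o.reverse) hL hP (pal_sig φ hrev ho) ?_
          rw [hB, hDo]
          simp [happ, hrev, hphiphi, pal_eq ho, pal_eq hL, pal_eq (pal_phi φ hrev ho),
            List.reverse_append, List.append_assoc]
    · -- L1 : hK1 : D.reverse = H ++ K, hK2 : B.reverse ++ D = K ++ (B ++ H)
      have hD : D = K.reverse ++ H := by
        have := congrArg List.reverse hK1
        simpa [List.reverse_append, pal_eq hH] using this
      have e2 : (B.reverse ++ K.reverse) ++ H = (K ++ B) ++ H := by
        calc (B.reverse ++ K.reverse) ++ H = B.reverse ++ D := by rw [hD]; simp [List.append_assoc]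
          _ = K ++ (B ++ H) := hK2
          _ = (K ++ B) ++ H := by simp [List.append_assoc]
      have e3 : B.reverse ++ K.reverse = K ++ B := List.append_cancel_right e2
      have pKB : Pal (K ++ B) := by
        show (K ++ B).reverse = K ++ B
        rw [List.reverse_append]
        exact e3
      rcases POL pKB with ⟨L, hL, hBL⟩ | ⟨L, hL, hKL⟩
      · -- hBL : B = L ++ K.reverse
        refine InC_first φ K L P (φ H.reverse) hL hP (pal_sig φ hrev hH) ?_
        rw [hBL, hK1]
        simp [happ, hrev, hphiphi, pal_eq hH, pal_eq hL, pal_eq (pal_phi φ hrev hH),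
          List.reverse_append, List.append_assoc]
      · -- hKL : K = B.reverse ++ L
        refine InC_first φ B.reverse P (φ L.reverse) (φ H.reverse)
          hP (pal_sig φ hrev hL) (pal_sig φ hrev hH) ?_
        rw [hK1, hKL]
        simp [happ, hrev, hphiphi, pal_eq hH, pal_eq hL, pal_eq (pal_phi φ hrev hH),
          pal_eq (pal_phi φ hrev hL), List.reverse_append, List.append_assoc]
  · -- hBH : B = C.reverse ++ H
    have hBrev : B.reverse = H ++ C := by
      rw [hBH]; simp [List.reverse_append, pal_eq hH]
    have e1 : D.reverse ++ C.reverse = C ++ D := by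
      have := pal_eq hCD
      simpa [List.reverse_append] using this
    rcases peel e1 with ⟨K, hK1, hK2⟩ | ⟨K, hK1, hK2⟩
    · -- R2 : hK1 : C = D.reverse ++ K, hK2 : C.reverse = K ++ D
      have hKpal : Pal K := by
        have h0 : K.reverse ++ D = K ++ D := by
          rw [← hK2, hK1]; simp [List.reverse_append]
        exact (List.append_inj h0 (by simp)).1
      refine InC_second φ D.reverse H K P hH hKpal hP ?_
      rw [hBrev, hK1]
      simp [List.append_assoc]
    · -- R1 : hK1 : D.reverse = C ++ K, hK2 : D = K ++ C.reverse
      have hKpal : Pal K := by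
        have h0 : K.reverse ++ C.reverse = K ++ C.reverse := by
          rw [← hK2]
          simpa [List.reverse_append] using (congrArg List.reverse hK1).symm
        exact (List.append_inj h0 (by simp)).1
      refine InC_second φ C H P (φ K.reverse) hH hP (pal_sig φ hrev hKpal) ?_
      rw [hBrev, hK1]
      simp [happ, hrev, hphiphi, pal_eq hKpal, pal_eq (pal_phi φ hrev hKpal), List.append_assoc]

end Aux6
section Aux7
variable {α : Type*} (φ : List α → List α)

/-- L2 : Pal (B ++ C), Pal (C ++ Q ++ D), Pal Q imply B.reverse ++ σD is in the class. -/
lemma lemL2 (happ : ∀ u v : List α, φ (u ++ v) = φ v ++ φ u)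
    (hphiphi : ∀ w : List α, φ (φ w) = w)
    (hrev : ∀ w : List α, φ w.reverse = (φ w).reverse)
    {B C Q D : List α} (hQ : Pal Q) (hBC : Pal (B ++ C)) (hM : Pal (C ++ (Q ++ D))) :
    InC φ (B.reverse ++ φ D.reverse) := by
  rcases POL hBC with ⟨H, hH, hCH⟩ | ⟨H, hH, hBH⟩
  · -- caseL : hCH : C = H ++ B.reverse
    have e1 : D.reverse ++ (Q ++ (B ++ H)) = H ++ (B.reverse ++ (Q ++ D)) := by
      have := pal_eq hM
      rw [hCH] at this
      simpa [List.reverse_append, pal_eq hH, pal_eq hQ, List.append_assoc] using this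
    rcases peel e1 with ⟨K, hK1, hK2⟩ | ⟨K, hK1, hK2⟩
    · -- L2sub : hK1 : H = D.reverse ++ K, hK2 : Q ++ (B ++ H) = K ++ (B.reverse ++ (Q ++ D))
      rw [hK1] at hH
      have xvi : K.reverse ++ D = D.reverse ++ K := by
        have := pal_eq hH
        simpa [List.reverse_append, List.append_assoc] using this
      have e2 : (Q ++ (B ++ K.reverse)) ++ D = (K ++ (B.reverse ++ Q)) ++ D := by
        calc (Q ++ (B ++ K.reverse)) ++ D = Q ++ (B ++ (K.reverse ++ D)) := by
              simp [List.append_assoc]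
          _ = Q ++ (B ++ (D.reverse ++ K)) := by rw [xvi]
          _ = K ++ (B.reverse ++ (Q ++ D)) := by rw [← hK2, hK1]
          _ = (K ++ (B.reverse ++ Q)) ++ D := by simp [List.append_assoc]
      have e3 : Q ++ (B ++ K.reverse) = K ++ (B.reverse ++ Q) := List.append_cancel_right e2
      have e4 : (K ++ B.reverse) ++ Q = Q ++ (K ++ B.reverse).reverse := by
        simpa [List.reverse_append, List.append_assoc] using e3.symm
      obtain ⟨s, t, hs, ht, hst⟩ := conjPal' e4
      rcases POL hH with ⟨m, hm, hKm⟩ | ⟨m, hm, hDm⟩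
      · -- (a) : hKm : K = m ++ D.reverse.reverse
        have hK' : K = m ++ D := by simpa using hKm
        have hst2 : m ++ (D ++ B.reverse) = s ++ t := by
          rw [← hst, hK']; simp [List.append_assoc]
        rcases peel hst2 with ⟨e, he1, he2⟩ | ⟨e, he1, he2⟩
        · -- a2 : he1 : s = m ++ e, he2 : D ++ B.reverse = e ++ t
          rw [he1] at hs
          have e6 : e.reverse ++ m = m ++ e.reverse.reverse := by
            have := pal_eq hs
            simpa [List.reverse_append, pal_eq hm, List.append_assoc] using this
          obtain ⟨c, d0, hc, hd0, hcd⟩ := conjPal' e6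
          have he : e = d0 ++ c := by
            have := congrArg List.reverse hcd
            simpa [List.reverse_append, pal_eq hc, pal_eq hd0] using this
          have h11 : D ++ B.reverse = d0 ++ (c ++ t) := by
            rw [he2, he]; simp [List.append_assoc]
          exact lem11 φ happ hphiphi hrev hd0 hc ht h11
        · -- a1 : he1 : m = s ++ e, he2 : t = e ++ (D ++ B.reverse)
          rw [he1] at hm
          have e6 : e.reverse ++ s = s ++ e.reverse.reverse := by
            have := pal_eq hm
            simpa [List.reverse_append, pal_eq hs, List.append_assoc] using this
          obtain ⟨c, d0, hc, hd0, hcd⟩ := conjPal' e6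
          have he : e = d0 ++ c := by
            have := congrArg List.reverse hcd
            simpa [List.reverse_append, pal_eq hc, pal_eq hd0] using this
          have hw : Pal (d0 ++ (c ++ (D ++ B.reverse))) := by
            rw [he2, he] at ht
            simpa [List.append_assoc] using ht
          exact lem10 φ happ hphiphi hrev d0.length d0 c D B le_rfl hd0 hc hw
      · -- (b) : hDm : D.reverse = K.reverse ++ m
        rcases peel hst with ⟨e, he1, he2⟩ | ⟨e, he1, he2⟩
        · -- b2 : he1 : s = K ++ e, he2 : B.reverse = e ++ t
          rw [he1] at hs
          rcases POL hs with ⟨o, ho, heo⟩ | ⟨o, ho, hKo⟩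
          · -- heo : e = o ++ K.reverse
            refine InC_second φ K.reverse o t (φ m.reverse) ho ht (pal_sig φ hrev hm) ?_
            rw [he2, heo, hDm]
            simp [happ, hrev, hphiphi, pal_eq hm, pal_eq (pal_phi φ hrev hm),
              List.reverse_append, List.append_assoc]
          · -- hKo : K = e.reverse ++ o
            refine InC_first φ e t (φ m.reverse) (φ o.reverse)
              ht (pal_sig φ hrev hm) (pal_sig φ hrev ho) ?_
            rw [he2, hDm, hKo]
            simp [happ, hrev, hphiphi, pal_eq hm, pal_eq ho, pal_eq (pal_phi φ hrev hm),
              pal_eq (pal_phi φ hrev ho), List.reverse_append, List.append_assoc]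
        · -- b1 : he1 : K = s ++ e, he2 : t = e ++ B.reverse
          rw [he2] at ht
          rcases POL ht with ⟨o, ho, hBo⟩ | ⟨o, ho, heo⟩
          · -- hBo : B.reverse = o ++ e.reverse
            refine InC_second φ e.reverse o (φ m.reverse) (φ s.reverse)
              ho (pal_sig φ hrev hm) (pal_sig φ hrev hs) ?_
            rw [hBo, hDm, he1]
            simp [happ, hrev, hphiphi, pal_eq hm, pal_eq hs, pal_eq (pal_phi φ hrev hm),
              pal_eq (pal_phi φ hrev hs), List.reverse_append, List.append_assoc]
          · -- heo : e = B.reverse.reverse ++ o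
            refine InC_first φ B.reverse (φ m.reverse) (φ s.reverse) (φ o.reverse)
              (pal_sig φ hrev hm) (pal_sig φ hrev hs) (pal_sig φ hrev ho) ?_
            rw [hDm, he1, heo]
            simp [happ, hrev, hphiphi, pal_eq hm, pal_eq hs, pal_eq ho,
              pal_eq (pal_phi φ hrev hm), pal_eq (pal_phi φ hrev hs),
              pal_eq (pal_phi φ hrev ho), List.reverse_append, List.append_assoc]
    · -- L1 : hK1 : D.reverse = H ++ K, hK2 : B.reverse ++ (Q ++ D) = K ++ (Q ++ (B ++ H))
      have hD : D = K.reverse ++ H := by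
        have := congrArg List.reverse hK1
        simpa [List.reverse_append, pal_eq hH] using this
      have e2 : (B.reverse ++ (Q ++ K.reverse)) ++ H = (K ++ (Q ++ B)) ++ H := by
        calc (B.reverse ++ (Q ++ K.reverse)) ++ H
            = B.reverse ++ (Q ++ (K.reverse ++ H)) := by simp [List.append_assoc]
          _ = B.reverse ++ (Q ++ D) := by rw [← hD]
          _ = K ++ (Q ++ (B ++ H)) := hK2
          _ = (K ++ (Q ++ B)) ++ H := by simp [List.append_assoc]
      have e3 : B.reverse ++ (Q ++ K.reverse) = K ++ (Q ++ B) := List.append_cancel_right e2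
      rcases peel e3 with ⟨L, hL1, hL2⟩ | ⟨L, hL1, hL2⟩
      · -- L1a : hL1 : K = B.reverse ++ L, hL2 : Q ++ K.reverse = L ++ (Q ++ B)
        have hKrev : K.reverse = L.reverse ++ B := by rw [hL1]; simp [List.reverse_append]
        have e4 : (Q ++ L.reverse) ++ B = (L ++ Q) ++ B := by
          calc (Q ++ L.reverse) ++ B = Q ++ (L.reverse ++ B) := by simp [List.append_assoc]
            _ = Q ++ K.reverse := by rw [← hKrev]
            _ = L ++ (Q ++ B) := hL2
            _ = (L ++ Q) ++ B := by simp [List.append_assoc]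
        have e5 : Q ++ L.reverse = L ++ Q := List.append_cancel_right e4
        have e6 : L ++ Q = Q ++ L.reverse := e5.symm
        obtain ⟨s, t, hs, ht, hst⟩ := conjPal' e6
        refine InC_first φ B.reverse (φ t.reverse) (φ s.reverse) (φ H.reverse)
          (pal_sig φ hrev ht) (pal_sig φ hrev hs) (pal_sig φ hrev hH) ?_
        rw [hK1, hL1, hst]
        simp [happ, hrev, hphiphi, pal_eq hs, pal_eq ht, pal_eq hH,
          pal_eq (pal_phi φ hrev hs), pal_eq (pal_phi φ hrev ht),
          pal_eq (pal_phi φ hrev hH), List.reverse_append, List.append_assoc]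
      · -- L1b : hL1 : B.reverse = K ++ L, hL2 : Q ++ B = L ++ (Q ++ K.reverse)
        have hB : B = L.reverse ++ K.reverse := by
          have := congrArg List.reverse hL1
          simpa [List.reverse_append] using this
        have e4 : (Q ++ L.reverse) ++ K.reverse = (L ++ Q) ++ K.reverse := by
          calc (Q ++ L.reverse) ++ K.reverse = Q ++ (L.reverse ++ K.reverse) := by
                simp [List.append_assoc]
            _ = Q ++ B := by rw [← hB]
            _ = L ++ (Q ++ K.reverse) := hL2
            _ = (L ++ Q) ++ K.reverse := by simp [List.append_assoc]
        have e5 : Q ++ L.reverse = L ++ Q := List.append_cancel_right e4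
        obtain ⟨s, t, hs, ht, hst⟩ := conjPal' e5.symm
        refine InC_first φ K s t (φ H.reverse) hs ht (pal_sig φ hrev hH) ?_
        rw [hL1, hst, hK1]
        simp [happ, hrev, hphiphi, pal_eq hs, pal_eq ht, pal_eq hH,
          pal_eq (pal_phi φ hrev hH), List.reverse_append, List.append_assoc]
  · -- caseR : hBH : B = C.reverse ++ H
    have hBrev : B.reverse = H ++ C := by
      rw [hBH]; simp [List.reverse_append, pal_eq hH]
    have e1 : D.reverse ++ (Q ++ C.reverse) = C ++ (Q ++ D) := by
      have := pal_eq hM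
      simpa [List.reverse_append, pal_eq hQ, List.append_assoc] using this
    rcases peel e1 with ⟨K, hK1, hK2⟩ | ⟨K, hK1, hK2⟩
    · -- R2 : hK1 : C = D.reverse ++ K, hK2 : Q ++ C.reverse = K ++ (Q ++ D)
      have hCrev : C.reverse = K.reverse ++ D := by rw [hK1]; simp [List.reverse_append]
      have e2 : (Q ++ K.reverse) ++ D = (K ++ Q) ++ D := by
        calc (Q ++ K.reverse) ++ D = Q ++ (K.reverse ++ D) := by simp [List.append_assoc]
          _ = Q ++ C.reverse := by rw [← hCrev]
          _ = K ++ (Q ++ D) := hK2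
          _ = (K ++ Q) ++ D := by simp [List.append_assoc]
      have e3 : Q ++ K.reverse = K ++ Q := List.append_cancel_right e2
      obtain ⟨s, t, hs, ht, hst⟩ := conjPal' e3.symm
      refine InC_second φ D.reverse H s t hH hs ht ?_
      rw [hBrev, hK1, hst]
      simp [List.append_assoc]
    · -- R1 : hK1 : D.reverse = C ++ K, hK2 : Q ++ D = K ++ (Q ++ C.reverse)
      have hD : D = K.reverse ++ C.reverse := by
        have := congrArg List.reverse hK1
        simpa [List.reverse_append] using this
      have e2 : (Q ++ K.reverse) ++ C.reverse = (K ++ Q) ++ C.reverse := by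
        calc (Q ++ K.reverse) ++ C.reverse = Q ++ (K.reverse ++ C.reverse) := by
              simp [List.append_assoc]
          _ = Q ++ D := by rw [← hD]
          _ = K ++ (Q ++ C.reverse) := hK2
          _ = (K ++ Q) ++ C.reverse := by simp [List.append_assoc]
      have e3 : Q ++ K.reverse = K ++ Q := List.append_cancel_right e2
      obtain ⟨s, t, hs, ht, hst⟩ := conjPal' e3.symm
      refine InC_second φ C H (φ t.reverse) (φ s.reverse)
        hH (pal_sig φ hrev ht) (pal_sig φ hrev hs) ?_
      rw [hBrev, hK1, hst]
      simp [happ, hrev, hphiphi, pal_eq hs, pal_eq ht, pal_eq (pal_phi φ hrev hs),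
        pal_eq (pal_phi φ hrev ht), List.reverse_append, List.append_assoc]

end Aux7
section Aux8
variable {α : Type*} (φ : List α → List α)

lemma main_aux (happ : ∀ u v : List α, φ (u ++ v) = φ v ++ φ u)
    (hphiphi : ∀ w : List α, φ (φ w) = w)
    (hrev : ∀ w : List α, φ w.reverse = (φ w).reverse) :
    ∀ (n : ℕ) (A : List α), A.length ≤ n → ∀ (P Q X R : List α), Pal P → Pal Q → Pal R →
      A ++ (P ++ (Q ++ (φ A ++ X))) = R → InC φ X := by
  intro n
  induction n using Nat.strong_induction_on with
  | _ n ih =>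
  intro A hn P Q X R hP hQ hR h
  by_cases hX : X = []
  · subst hX
    exact InC_first φ [] [] [] [] pal_nil pal_nil pal_nil (by simp [phi_nil φ happ])
  have hWX : Pal ((A ++ (P ++ (Q ++ φ A))) ++ X) := by
    have hwr : (A ++ (P ++ (Q ++ φ A))) ++ X = R := by rw [← h]; simp [List.append_assoc]
    rwa [hwr]
  have ME : X.reverse ++ (A ++ (P ++ (Q ++ φ A))).reverse
      = (A ++ (P ++ (Q ++ φ A))) ++ X := by
    have := pal_eq hWX
    simpa [List.reverse_append, List.append_assoc] using this
  rcases peel ME with ⟨M, hM1, hM2⟩ | ⟨Y, hY1, hY2⟩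
  · -- SMALL : hM1 : A ++ (P ++ (Q ++ φ A)) = X.reverse ++ M,
    -- hM2 : (A ++ (P ++ (Q ++ φ A))).reverse = M ++ X
    have hMpal : Pal M := by
      have h2 : M.reverse ++ X = M ++ X := by
        rw [← hM2, hM1]; simp [List.reverse_append]
      exact (List.append_inj h2 (by simp)).1
    rcases peel hM1 with ⟨V, hV1, hV2⟩ | ⟨A₂, hA1, hA2⟩
    · -- hV1 : X.reverse = A ++ V, hV2 : P ++ (Q ++ φ A) = V ++ M
      have hXeq : X = V.reverse ++ A.reverse := by
        have := congrArg List.reverse hV1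
        simpa [List.reverse_append] using this
      rcases peel hV2.symm with ⟨P₂, hP1, hP2⟩ | ⟨V₂, hV21, hV22⟩
      · -- C2 : hP1 : P = V ++ P₂, hP2 : Q ++ φ A = P₂ ++ M  ??
        -- peel (V ++ M = P ++ (Q ++ φ A)) : branch1 : ∃ w, P = V ++ w ∧ M = w ++ (Q ++ φ A)
        rw [hP1] at hP
        have hM2pal : Pal (P₂ ++ (Q ++ φ A)) := by rw [← hP2]; exact hMpal
        have hgoal : X = V.reverse ++ φ (φ A).reverse := by
          rw [hXeq]; simp [hrev, hphiphi]
        rw [hgoal]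
        exact lemL2 φ happ hphiphi hrev hQ hP hM2pal
      ·
        -- branch2 of peel (V ++ M = P ++ (Q ++ φ A)) : ∃ w, V = P ++ w ∧ Q ++ φ A = w ++ M
        rcases peel hV22.symm with ⟨Q₂, hQ1, hQ2⟩ | ⟨V₃, hV31, hV32⟩
        · -- C3 : hQ1 : Q = V₂ ++ Q₂, hQ2 : M = Q₂ ++ φ A
          rw [hQ1] at hQ
          have hCD : Pal (Q₂ ++ φ A) := by rw [← hQ2]; exact hMpal
          have hgoal : X = V₂.reverse ++ P ++ φ (φ A).reverse := by
            rw [hXeq, hV21]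
            simp [List.reverse_append, pal_eq hP, hrev, hphiphi, List.append_assoc]
          rw [hgoal]
          exact lemL3 φ happ hphiphi hrev hP hQ hCD
        · -- C4 : hV31 : V₂ = Q ++ V₃, hV32 : φ A = V₃ ++ M
          have hA : A = φ M ++ φ V₃ := by
            rw [← hphiphi A, hV32, happ]
          refine InC_first φ V₃.reverse Q P (φ M.reverse) hQ hP (pal_sig φ hrev hMpal) ?_
          rw [hXeq, hV21, hV31, hA]
          simp [List.reverse_append, pal_eq hP, pal_eq hQ, pal_eq hMpal,
            pal_eq (pal_phi φ hrev hMpal), happ, hrev, hphiphi, List.append_assoc]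
    · -- C1 : hA1 : A = X.reverse ++ A₂, hA2 : M = A₂ ++ (P ++ (Q ++ φ A))
      have heq : A₂ ++ (P ++ (Q ++ (φ A₂ ++ φ X.reverse))) = M := by
        rw [hA2, hA1]
        simp [happ, List.append_assoc]
      have hlt : A₂.length < n := by
        have h1 : A.length = X.reverse.length + A₂.length := by rw [hA1]; simp
        have h2 : 0 < X.length := List.length_pos_iff.2 hX
        simp only [List.length_reverse] at h1
        omega
      have hres := ih A₂.length hlt A₂ le_rfl P Q (φ X.reverse) M hP hQ hMpal heq
      exact InC_sigma φ happ hphiphi hrev hres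
  · -- BIG : hY1 : X.reverse = (A ++ (P ++ (Q ++ φ A))) ++ Y, hY2 : X = Y ++ (A ++ (P ++ (Q ++ φ A))).reverse
    have hYpal : Pal Y := by
      have h2 : (A ++ (P ++ (Q ++ φ A))) ++ Y.reverse = (A ++ (P ++ (Q ++ φ A))) ++ Y := by
        rw [← hY1, hY2]; simp [List.reverse_append, List.append_assoc]
      exact List.append_cancel_left h2
    refine InC_second φ (φ A).reverse Y Q P hYpal hQ hP ?_
    rw [hY2]
    simp [List.reverse_append, pal_eq hP, pal_eq hQ, hrev, hphiphi, List.append_assoc]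

end Aux8

theorem stmt13 {α : Type*} (φ : List α → List α)
    (hanti : ∀ X Y : List α, φ (X ++ Y) = φ Y ++ φ X)
    (hbij : Function.Bijective φ)
    (hinv : ∀ a : α, φ (φ [a]) = [a])
    (A X P Q R : List α) (hP : Pal P) (hQ : Pal Q) (hR : Pal R)
    (h : A ++ P ++ Q ++ φ A ++ X = R) :
    ∃ S T U Z : List α, Pal S ∧ Pal T ∧ Pal U ∧
      (X = Z ++ S ++ T ++ φ Z ++ U ∨ X = S ++ Z ++ T ++ U ++ φ Z) := by
  have hinj := hbij.injective
  have hnil : φ [] = [] := phi_nil φ hanti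
  have hsingle : ∀ a : α, ∃ b : α, φ [a] = [b] := by
    intro a
    cases hu : φ [a] with
    | nil =>
      exfalso
      have h1 := hinv a
      rw [hu, hnil] at h1
      simp at h1
    | cons b t =>
      refine ⟨b, ?_⟩
      have h1 : φ t ++ φ [b] = [a] := by
        have h2 := hinv a
        rw [hu] at h2
        calc φ t ++ φ [b] = φ ([b] ++ t) := (hanti [b] t).symm
          _ = [a] := by simpa using h2
      have hb : φ [b] ≠ [] := by
        intro hb0
        have : ([b] : List α) = [] := hinj (hb0.trans hnil.symm)
        simp at this
      have hlen : (φ t).length + (φ [b]).length = 1 := by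
        have := congrArg List.length h1; simpa using this
      have hlt : 0 < (φ [b]).length := List.length_pos_iff.2 hb
      have ht0 : φ t = [] := List.length_eq_zero_iff.1 (by omega)
      have ht : t = [] := hinj (ht0.trans hnil.symm)
      rw [ht]
  have hphiphi : ∀ w : List α, φ (φ w) = w := by
    intro w
    induction w with
    | nil => rw [hnil, hnil]
    | cons a t ihw =>
      have h1 : φ (a :: t) = φ t ++ φ [a] := by
        calc φ (a :: t) = φ ([a] ++ t) := by simp
          _ = φ t ++ φ [a] := hanti [a] t
      rw [h1, hanti, hinv, ihw]
      simp
  have hrev : ∀ w : List α, φ w.reverse = (φ w).reverse := by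
    intro w
    induction w with
    | nil => simp [hnil]
    | cons a t ihw =>
      obtain ⟨b, hb⟩ := hsingle a
      calc φ ((a :: t).reverse) = φ (t.reverse ++ [a]) := by simp
        _ = φ [a] ++ φ t.reverse := hanti _ _
        _ = [b] ++ (φ t).reverse := by rw [hb, ihw]
        _ = (φ t ++ [b]).reverse := by simp
        _ = (φ ([a] ++ t)).reverse := by rw [hanti, hb]
        _ = (φ (a :: t)).reverse := by simp
  have hmain := main_aux φ hanti hphiphi hrev A.length A le_rfl P Q X R hP hQ hR
    (by simpa [List.append_assoc] using h)
  exact hmain
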